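/- Let J be the \kappa-by-\kappa upper-triangular Jordan block with eigenvalue x_a, let r_0, ..., r_{\kappa-1} be vectors in ℂ^p, set r(x) = \sum_{j=0}^{\kappa-1} r_j (x - x_a)^j, and let R = [r_0, ..., r_{\kappa-1}] be the p-by-\kappa matrix with these columns. Then for every natural number n, the p-by-\kappa matrix whose m-th column (0 \le m \le \kappa-1) is (1/m!) times the m-th derivative of x^n * r(x) evaluated at x = x_a equals R * J^n. -/

import Mathlib

open Polynomial Finset

-- Jordan block power entries
lemma jpow (κ : ℕ) (xa : ℂ) (J : Matrix (Fin κ) (Fin κ) ℂ)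
    (hJ : ∀ i j : Fin κ,
      J i j = if j = i then xa else if (j : ℕ) = (i : ℕ) + 1 then 1 else 0)
    (n : ℕ) (j m : Fin κ) :
    (J ^ n) j m = if (j : ℕ) ≤ (m : ℕ) then
      (n.choose ((m : ℕ) - (j : ℕ)) : ℂ) * xa ^ (n - ((m : ℕ) - (j : ℕ))) else 0 := by
  induction n generalizing m with
  | zero =>
    simp only [pow_zero, Matrix.one_apply]
    rcases lt_trichotomy (j : ℕ) (m : ℕ) with h | h | h
    · rw [if_neg (by intro e; subst e; omega), if_pos h.le,
        Nat.choose_eq_zero_of_lt (by omega)]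
      simp
    · rw [if_pos (Fin.ext h), if_pos h.le]
      simp [h]
    · rw [if_neg (by intro e; subst e; omega), if_neg (by omega)]
  | succ n ih =>
    rw [pow_succ, Matrix.mul_apply]
    have hsplit : ∀ k : Fin κ, (J ^ n) j k * J k m =
        (if k = m then (J ^ n) j m * xa else 0) +
        (if (m : ℕ) = (k : ℕ) + 1 then (J ^ n) j k else 0) := by
      intro k
      rw [hJ]
      rcases eq_or_ne k m with h | h
      · subst h; simp
      · rw [if_neg (fun e => h (Fin.ext (congrArg Fin.val e)).symm), if_neg h]
        rcases eq_or_ne (m : ℕ) ((k : ℕ) + 1) with h2 | h2 <;> simp [h2]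
    rw [Finset.sum_congr rfl (fun k _ => hsplit k), Finset.sum_add_distrib,
      Finset.sum_ite_eq' _ m, if_pos (mem_univ m)]
    have hsecond : (∑ k : Fin κ, if (m : ℕ) = (k : ℕ) + 1 then (J ^ n) j k else 0) =
        if h : (m : ℕ) = 0 then 0 else (J ^ n) j ⟨(m : ℕ) - 1, by omega⟩ := by
      split
      · next h0 => exact Finset.sum_eq_zero fun k _ => by rw [if_neg (by omega)]
      · next h0 =>
        have : ∀ k : Fin κ, ((m : ℕ) = (k : ℕ) + 1) ↔ k = ⟨(m : ℕ) - 1, by omega⟩ := by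
          intro k
          constructor
          · intro h; exact Fin.ext (by simp only [Fin.val_mk]; omega)
          · intro h; subst h; simp; omega
        simp_rw [this]
        rw [Finset.sum_ite_eq' _ _, if_pos (mem_univ _)]
    rw [hsecond, ih, ih]
    rcases Nat.eq_zero_or_pos (m : ℕ) with h0 | h0
    · rw [dif_pos h0]
      rcases Nat.eq_zero_or_pos (j : ℕ) with hj | hj
      · rw [if_pos (by omega), if_pos (by omega)]
        simp [h0, hj, pow_succ]
      · rw [if_neg (by omega), if_neg (by omega)]; ring
    · rw [dif_neg (by omega)]
      rcases lt_trichotomy (j : ℕ) (m : ℕ) with h | h | h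
      · rw [if_pos h.le, if_pos h.le, if_pos (by simp only [Fin.val_mk]; omega)]
        set d := (m : ℕ) - (j : ℕ) with hd
        have hd1 : (m : ℕ) - 1 - (j : ℕ) = d - 1 := by omega
        have hdpos : 1 ≤ d := by omega
        rw [hd1]
        rcases lt_trichotomy d (n + 1) with hdn | hdn | hdn
        · have e1 : n - d + 1 = n + 1 - d := by omega
          have e2 : n - (d - 1) = n + 1 - d := by omega
          have e3 : (n + 1).choose d = n.choose (d - 1) + n.choose d := by
            conv_lhs => rw [show d = (d - 1) + 1 by omega]
            have hs : (d - 1).succ = d := by omega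
            rw [Nat.choose_succ_succ, hs]
          rw [e3, show n - (d - 1) = n - d + 1 by omega, show n + 1 - d = n - d + 1 by omega, pow_succ]
          push_cast
          ring
        · rw [hdn, show n + 1 - 1 = n from rfl]
          simp [Nat.choose_eq_zero_of_lt (Nat.lt_succ_self n)]
        · rw [Nat.choose_eq_zero_of_lt (by omega), Nat.choose_eq_zero_of_lt (by omega),
            Nat.choose_eq_zero_of_lt (by omega)]
          simp
      · simp only [Fin.val_mk]
        rw [if_pos h.le, if_pos h.le, if_neg (by omega)]
        simp [h, pow_succ]
      · simp only [Fin.val_mk]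
        rw [if_neg (by omega), if_neg (by omega), if_neg (by omega)]
        ring



/-- Root spectral jets and Jordan blocks: with `J` the `κ×κ` Jordan block at `x_a`,
`r(x) = ∑_{j<κ} r_j (x-x_a)^j` and `R = [r_0,…,r_{κ-1}]`, the `m`-th column of the matrix
of normalized derivatives of `x^n r(x)` at `x_a` equals the `m`-th column of `R * J^n`. -/
theorem stmt_4 (p κ : ℕ) (xa : ℂ) (r : ℕ → Fin p → ℂ)
    (J : Matrix (Fin κ) (Fin κ) ℂ)
    (hJ : ∀ i j : Fin κ,
      J i j = if j = i then xa else if (j : ℕ) = (i : ℕ) + 1 then 1 else 0)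
    (R : Matrix (Fin p) (Fin κ) ℂ) (hR : ∀ (i : Fin p) (m : Fin κ), R i m = r (m : ℕ) i)
    (n : ℕ) (i : Fin p) (m : Fin κ) :
    (Polynomial.derivative^[(m : ℕ)]
          (Polynomial.X ^ n *
            ∑ j ∈ Finset.range κ,
              Polynomial.C (r j i) * (Polynomial.X - Polynomial.C xa) ^ j)).eval xa /
        ((m : ℕ).factorial : ℂ) =
      (R * J ^ n) i m := by
  set S : ℂ[X] := ∑ j ∈ Finset.range κ, C (r j i) * (X - C xa) ^ j with hS
  set P : ℂ[X] := X ^ n * S with hP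
  have hfac : ((m : ℕ).factorial : ℂ) ≠ 0 := by
    exact_mod_cast Nat.cast_ne_zero.mpr (Nat.factorial_ne_zero _)
  -- LHS equals Taylor coefficient
  have hL : (derivative^[(m : ℕ)] P).eval xa / ((m : ℕ).factorial : ℂ)
      = (taylor xa P).coeff (m : ℕ) := by
    rw [taylor_coeff, ← factorial_smul_hasseDeriv]
    simp only [LinearMap.smul_apply, Module.End.mul_apply, Module.End.natCast_apply, eval_smul, nsmul_eq_mul, eval_mul, eval_natCast]
    field_simp
  rw [hL]
  -- compute taylor of P
  have hT : taylor xa P = (X + C xa) ^ n * ∑ j ∈ Finset.range κ, C (r j i) * X ^ j := by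
    rw [hP, taylor_mul]
    congr 1
    · rw [show (taylor xa) (X ^ n : ℂ[X]) = (taylorAlgHom xa) (X ^ n) from rfl, map_pow,
        taylorAlgHom_apply, taylor_X]
    · rw [hS, map_sum]
      refine Finset.sum_congr rfl fun j _ => ?_
      rw [taylor_mul, taylor_C,
        show (taylor xa) ((X - C xa) ^ j : ℂ[X]) = (taylorAlgHom xa) ((X - C xa) ^ j) from rfl,
        map_pow, map_sub, taylorAlgHom_apply, taylorAlgHom_apply, taylor_X, taylor_C,
        add_sub_cancel_right]
  rw [hT]
  -- coefficient of the RHS polynomial sum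
  have hcoeffT : ∀ t : ℕ, t < κ →
      (∑ j ∈ Finset.range κ, C (r j i) * X ^ j).coeff t = r t i := by
    intro t ht
    rw [finset_sum_coeff]
    simp only [coeff_C_mul, coeff_X_pow, mul_ite, mul_one, mul_zero]
    rw [Finset.sum_ite_eq (Finset.range κ) t, if_pos (Finset.mem_range.mpr ht)]
  rw [coeff_mul, Finset.Nat.sum_antidiagonal_eq_sum_range_succ_mk]
  have hLsum : ∀ k ∈ Finset.range ((m : ℕ) + 1),
      ((X + C xa) ^ n).coeff k * (∑ j ∈ Finset.range κ, C (r j i) * X ^ j).coeff ((m : ℕ) - k)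
      = xa ^ (n - k) * (n.choose k : ℂ) * r ((m : ℕ) - k) i := by
    intro k hk
    rw [coeff_X_add_C_pow, hcoeffT _ (by have := m.isLt; omega)]
  rw [Finset.sum_congr rfl hLsum]
  -- RHS
  rw [Matrix.mul_apply]
  have hRsum : ∀ j : Fin κ, R i j * (J ^ n) j m =
      (fun t : ℕ => if t ≤ (m : ℕ) then
        r t i * ((n.choose ((m : ℕ) - t) : ℂ) * xa ^ (n - ((m : ℕ) - t))) else 0) (j : ℕ) := by
    intro j
    rw [hR, jpow κ xa J hJ n j m]
    by_cases h : (j : ℕ) ≤ (m : ℕ) <;> simp [h]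
  rw [Finset.sum_congr rfl (fun j _ => hRsum j),
    Fin.sum_univ_eq_sum_range (fun t : ℕ => if t ≤ (m : ℕ) then
      r t i * ((n.choose ((m : ℕ) - t) : ℂ) * xa ^ (n - ((m : ℕ) - t))) else 0) κ]
  rw [← Finset.sum_subset (Finset.range_subset_range.mpr (show (m : ℕ) + 1 ≤ κ from m.isLt))
      (fun x _ hx => by rw [if_neg (by simp at hx ⊢; omega)])]
  rw [← Finset.sum_range_reflect]
  refine Finset.sum_congr rfl fun k hk => ?_
  have hk' : k ≤ (m : ℕ) := by simp at hk; omega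
  rw [if_pos (by omega), show (m : ℕ) + 1 - 1 - k = (m : ℕ) - k from by omega,
    show (m : ℕ) - ((m : ℕ) - k) = k from by omega]
  ring
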